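/- For every finite simple graph G, |corona(G)| + |core(G)| ≤ 2·α(G) + k, where k is the number of odd cycles in G. -/

import Mathlib

variable {V : Type*} [Fintype V] [DecidableEq V]

/-- `S` is an independent set of `G`. -/
def IsIndep (G : SimpleGraph V) (S : Set V) : Prop :=
  ∀ ⦃u⦄, u ∈ S → ∀ ⦃v⦄, v ∈ S → ¬ G.Adj u v

/-- The independence number `α(G)`: the maximum cardinality of an independent set. -/
noncomputable def indepNum (G : SimpleGraph V) : ℕ :=
  sSup {n : ℕ | ∃ S : Set V, IsIndep G S ∧ S.ncard = n}

/-- `S` is a maximum independent set of `G`. -/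
def IsMaxIndep (G : SimpleGraph V) (S : Set V) : Prop :=
  IsIndep G S ∧ ∀ T : Set V, IsIndep G T → T.ncard ≤ S.ncard

/-- The neighborhood `N(X)` of a set of vertices `X`. -/
def nbhdSet (G : SimpleGraph V) (X : Set V) : Set V :=
  {v | ∃ u ∈ X, G.Adj u v}

/-- The difference `d_G(X) = |X| - |N(X)|` of a vertex set `X`. -/
noncomputable def diffSet (G : SimpleGraph V) (X : Set V) : ℤ :=
  (X.ncard : ℤ) - ((nbhdSet G X).ncard : ℤ)

/-- `I` is a critical independent set of `G`. -/
def IsCriticalIndep (G : SimpleGraph V) (I : Set V) : Prop :=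
  IsIndep G I ∧ ∀ J : Set V, IsIndep G J → diffSet G J ≤ diffSet G I

/-- `I` is a maximum-cardinality critical independent set of `G`. -/
def IsMaxCriticalIndep (G : SimpleGraph V) (I : Set V) : Prop :=
  IsCriticalIndep G I ∧ ∀ J : Set V, IsCriticalIndep G J → J.ncard ≤ I.ncard

/-- `core(G)`: the intersection of all maximum independent sets of `G`. -/
def coreSet (G : SimpleGraph V) : Set V := ⋂₀ {S : Set V | IsMaxIndep G S}

/-- `corona(G)`: the union of all maximum independent sets of `G`. -/
def coronaSet (G : SimpleGraph V) : Set V := ⋃₀ {S : Set V | IsMaxIndep G S}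

/-- `ker(G)`: the intersection of all critical independent sets of `G`. -/
def kerSet (G : SimpleGraph V) : Set V := ⋂₀ {S : Set V | IsCriticalIndep G S}

/-- `diadem(G)`: the union of all critical independent sets of `G`. -/
def diademSet (G : SimpleGraph V) : Set V := ⋃₀ {S : Set V | IsCriticalIndep G S}

/-- `nucleus(G)`: the intersection of all maximum-cardinality critical independent
sets of `G`. -/
def nucleusSet (G : SimpleGraph V) : Set V := ⋂₀ {S : Set V | IsMaxCriticalIndep G S}

/-- `C` is the vertex set of some odd cycle of `G`. -/
def IsOddCycleVertexSet (G : SimpleGraph V) (C : Set V) : Prop :=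
  ∃ (v : V) (w : G.Walk v v), w.IsCycle ∧ Odd w.length ∧ {x | x ∈ w.support} = C

/-- The maximum cardinality of a set of pairwise vertex-distinct odd cycles of `G`,
i.e. the number of distinct vertex sets of odd cycles of `G`. -/
noncomputable def numVertexDistinctOddCycles (G : SimpleGraph V) : ℕ :=
  {C : Set V | IsOddCycleVertexSet G C}.ncard

/-- `E` is the edge set of some odd cycle of `G`. -/
def IsOddCycleEdgeSet (G : SimpleGraph V) (E : Set (Sym2 V)) : Prop :=
  ∃ (v : V) (w : G.Walk v v), w.IsCycle ∧ Odd w.length ∧ {e | e ∈ w.edges} = E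

/-- The number of (distinct) odd cycles of `G`, where a cycle is identified with
its edge set. -/
noncomputable def numOddCycles (G : SimpleGraph V) : ℕ :=
  {E : Set (Sym2 V) | IsOddCycleEdgeSet G E}.ncard

set_option linter.unusedSectionVars false

section

open SimpleGraph

/-- Auxiliary bipartite graph between `Z` and `Y`. -/
def auxG (G : SimpleGraph V) (Z Y : Set V) : SimpleGraph V where
  Adj u v := G.Adj u v ∧ ((u ∈ Z ∧ v ∈ Y) ∨ (u ∈ Y ∧ v ∈ Z))
  symm := by
    constructor
    intro u v h
    exact ⟨h.1.symm, h.2.elim (fun hh => Or.inr ⟨hh.2, hh.1⟩) (fun hh => Or.inl ⟨hh.2, hh.1⟩)⟩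
  loopless := ⟨fun v h => G.loopless.irrefl v h.1⟩

lemma auxG_adj {G : SimpleGraph V} {Z Y : Set V} {u v : V} :
    (auxG G Z Y).Adj u v ↔ G.Adj u v ∧ ((u ∈ Z ∧ v ∈ Y) ∨ (u ∈ Y ∧ v ∈ Z)) := Iff.rfl

lemma auxG_parity (G : SimpleGraph V) (Z Y : Set V) (hd : Disjoint Z Y) {u v : V}
    (w : (auxG G Z Y).Walk u v) :
    (u ∈ Z → (Even w.length → v ∈ Z) ∧ (¬ Even w.length → v ∈ Y)) ∧
    (u ∈ Y → (Even w.length → v ∈ Y) ∧ (¬ Even w.length → v ∈ Z)) := by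
  induction w with
  | nil => simp
  | @cons u x v h p ih =>
    rw [Walk.length_cons]
    constructor
    · intro huZ
      have hxY : x ∈ Y := by
        rcases (auxG_adj.mp h).2 with ⟨_, hx⟩ | ⟨hu, _⟩
        · exact hx
        · exact absurd huZ (Set.disjoint_right.mp hd hu)
      have := ih.2 hxY
      constructor
      · intro he
        rw [Nat.even_add_one] at he
        exact this.2 he
      · intro he
        rw [Nat.even_add_one, not_not] at he
        exact this.1 he
    · intro huY
      have hxZ : x ∈ Z := by
        rcases (auxG_adj.mp h).2 with ⟨hu, _⟩ | ⟨_, hx⟩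
        · exact absurd huY (Set.disjoint_left.mp hd hu)
        · exact hx
      have := ih.1 hxZ
      constructor
      · intro he
        rw [Nat.even_add_one] at he
        exact this.2 he
      · intro he
        rw [Nat.even_add_one, not_not] at he
        exact this.1 he

lemma auxG_support (G : SimpleGraph V) (Z Y : Set V) {u v : V}
    (w : (auxG G Z Y).Walk u v) : ∀ x ∈ w.support, x = u ∨ x ∈ Z ∪ Y := by
  induction w with
  | nil => intro x hx; left; simpa using hx
  | @cons u a v h p ih =>
    intro x hx
    rw [Walk.support_cons, List.mem_cons] at hx
    rcases hx with rfl | hx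
    · exact Or.inl rfl
    · rcases ih x hx with rfl | hxx
      · refine Or.inr ?_
        rcases (auxG_adj.mp h).2 with ⟨_, ha⟩ | ⟨_, ha⟩
        · exact Set.mem_union_right _ ha
        · exact Set.mem_union_left _ ha
      · exact Or.inr hxx

/-- Edge sets of odd cycles supported inside `X`. -/
def cycSet (G : SimpleGraph V) (X : Set V) : Set (Set (Sym2 V)) :=
  {E | ∃ (v : V) (w : G.Walk v v), w.IsCycle ∧ Odd w.length ∧ {e | e ∈ w.edges} = E ∧
    ∀ x ∈ w.support, x ∈ X}

lemma key (G : SimpleGraph V) (R : Set V) :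
    ∀ (n : ℕ) (L : Set V), L.ncard ≤ n → Disjoint L R →
      (∀ Z, Z ⊆ L → IsIndep G Z → Z.ncard ≤ (nbhdSet G Z ∩ R).ncard) →
      L.ncard ≤ R.ncard + (cycSet G (L ∪ R)).ncard := by
  intro n
  induction n with
  | zero => intro L hL _ _; omega
  | succ n ih =>
    intro L hL hdisj hyp
    by_cases hhall : ∀ Z, Z ⊆ L → ¬ ((nbhdSet G Z ∩ R).ncard < Z.ncard)
    · have h1 := hhall L subset_rfl
      have h2 : (nbhdSet G L ∩ R).ncard ≤ R.ncard :=
        Set.ncard_le_ncard Set.inter_subset_right (Set.toFinite _)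
      omega
    · push_neg at hhall
      obtain ⟨Z₀, hZ₀L, hZ₀⟩ := hhall
      have hne : {m | ∃ Z, Z ⊆ L ∧ (nbhdSet G Z ∩ R).ncard < Z.ncard ∧ Z.ncard = m}.Nonempty :=
        ⟨Z₀.ncard, Z₀, hZ₀L, hZ₀, rfl⟩
      obtain ⟨Z, hZL, hZviol, hZcard⟩ := Nat.sInf_mem hne
      have hmin : ∀ W, W ⊆ L → W.ncard < Z.ncard → W.ncard ≤ (nbhdSet G W ∩ R).ncard := by
        intro W hWL hWlt
        by_contra hc
        push_neg at hc
        have hmem : W.ncard ∈ {m | ∃ Z, Z ⊆ L ∧ (nbhdSet G Z ∩ R).ncard < Z.ncard ∧ Z.ncard = m} :=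
          ⟨W, hWL, hc, rfl⟩
        have := Nat.sInf_le hmem
        omega
      set Y := nbhdSet G Z ∩ R with hYdef
      have hZYdisj : Disjoint Z Y :=
        (hdisj.mono hZL Set.inter_subset_right)
      have hZnotind : ¬ IsIndep G Z := by
        intro hind
        have := hyp Z hZL hind
        rw [← hYdef] at this
        omega
      have hex : ∃ z1 ∈ Z, ∃ z2 ∈ Z, G.Adj z1 z2 := by
        by_contra hc
        push_neg at hc
        exact hZnotind fun u hu v hv => hc u hu v hv
      obtain ⟨z1, hz1Z, z2, hz2Z, hadj⟩ := hex
      set B := auxG G Z Y with hB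
      have hreach : B.Reachable z1 z2 := by
        by_contra hnr
        set Z1 := {z ∈ Z | B.Reachable z1 z} with hZ1
        have hz1Z1 : z1 ∈ Z1 := ⟨hz1Z, Reachable.refl z1⟩
        have hz2Z1 : z2 ∉ Z1 := fun h => hnr h.2
        have hY1sub : nbhdSet G Z1 ∩ R ⊆ Y := by
          rintro y ⟨⟨z, hzZ1, hzy⟩, hyR⟩
          exact ⟨⟨z, hzZ1.1, hzy⟩, hyR⟩
        have hreachY : ∀ y ∈ nbhdSet G Z1 ∩ R, B.Reachable z1 y := by
          rintro y ⟨⟨z, hzZ1, hzy⟩, hyR⟩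
          have hyY : y ∈ Y := ⟨⟨z, hzZ1.1, hzy⟩, hyR⟩
          exact hzZ1.2.trans (Adj.reachable (auxG_adj.mpr ⟨hzy, Or.inl ⟨hzZ1.1, hyY⟩⟩))
        have hsub2 : nbhdSet G (Z \ Z1) ∩ R ⊆ Y \ (nbhdSet G Z1 ∩ R) := by
          rintro y ⟨⟨z, hzZ2, hzy⟩, hyR⟩
          have hyY : y ∈ Y := ⟨⟨z, hzZ2.1, hzy⟩, hyR⟩
          refine ⟨hyY, fun hy1 => ?_⟩
          have hzreach : B.Reachable z1 z :=
            (hreachY y hy1).trans (Adj.reachable (auxG_adj.mpr ⟨hzy.symm, Or.inr ⟨hyY, hzZ2.1⟩⟩))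
          exact hzZ2.2 ⟨hzZ2.1, hzreach⟩
        have hZ1L : Z1 ⊆ L := fun z hz => hZL hz.1
        have hZ1lt : Z1.ncard < Z.ncard :=
          Set.ncard_lt_ncard ⟨fun z hz => hz.1, fun hsub => hz2Z1 (hsub hz2Z)⟩ (Set.toFinite _)
        have hZ2lt : (Z \ Z1).ncard < Z.ncard :=
          Set.ncard_lt_ncard ⟨Set.diff_subset, fun hsub => (hsub hz1Z).2 hz1Z1⟩ (Set.toFinite _)
        have h1 := hmin Z1 hZ1L hZ1lt
        have h2 := hmin (Z \ Z1) (fun z hz => hZL hz.1) hZ2lt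
        have h3 : (nbhdSet G (Z \ Z1) ∩ R).ncard ≤ (Y \ (nbhdSet G Z1 ∩ R)).ncard :=
          Set.ncard_le_ncard hsub2 (Set.toFinite _)
        have h4 : (Y \ (nbhdSet G Z1 ∩ R)).ncard + (nbhdSet G Z1 ∩ R).ncard = Y.ncard :=
          Set.ncard_diff_add_ncard_of_subset hY1sub (Set.toFinite _)
        have h5 : (Z \ Z1).ncard + Z1.ncard = Z.ncard :=
          Set.ncard_diff_add_ncard_of_subset (fun z hz => hz.1) (Set.toFinite _)
        omega
      obtain ⟨w⟩ := hreach
      let p : B.Path z1 z2 := w.toPath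
      have hpeven : Even (p : B.Walk z1 z2).length := by
        by_contra hodd
        have := ((auxG_parity G Z Y hZYdisj (p : B.Walk z1 z2)).1 hz1Z).2 hodd
        exact Set.disjoint_left.mp hZYdisj hz2Z this
      let q : B.Walk z2 z1 := (p : B.Walk z1 z2).reverse
      have hqpath : q.IsPath := p.2.reverse
      have hqeven : Even q.length := by
        show Even (p : B.Walk z1 z2).reverse.length
        rwa [Walk.length_reverse]
      have hBle : B ≤ G := fun {a b} h => (auxG_adj.mp h).1
      have hq' : ∀ e ∈ q.edges, e ∈ G.edgeSet := fun e he =>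
        (SimpleGraph.edgeSet_mono hBle) (q.edges_subset_edgeSet he)
      let q' : G.Walk z2 z1 := q.transfer G hq'
      have hq'path : q'.IsPath := hqpath.transfer hq'
      have hnotmem : s(z1, z2) ∉ q'.edges := by
        show s(z1, z2) ∉ (q.transfer G hq').edges
        rw [Walk.edges_transfer]
        intro hmem
        have hBe := q.edges_subset_edgeSet hmem
        rw [SimpleGraph.mem_edgeSet] at hBe
        rcases (auxG_adj.mp hBe).2 with ⟨_, h2⟩ | ⟨h1, _⟩
        · exact Set.disjoint_left.mp hZYdisj hz2Z h2
        · exact Set.disjoint_left.mp hZYdisj hz1Z h1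
      let c : G.Walk z1 z1 := Walk.cons hadj q'
      have hcyc : c.IsCycle := by
        show (Walk.cons hadj q').IsCycle
        rw [Walk.cons_isCycle_iff]
        exact ⟨hq'path, hnotmem⟩
      have hodd : Odd c.length := by
        show Odd (Walk.cons hadj q').length
        rw [Walk.length_cons]
        have : q'.length = q.length := Walk.length_transfer _ _
        rw [this]
        exact hqeven.add_one
      have hz1L : z1 ∈ L := hZL hz1Z
      have hsupp : ∀ x ∈ c.support, x ∈ L ∪ R := by
        intro x hx
        have hx' : x ∈ (Walk.cons hadj q').support := hx
        rw [Walk.support_cons, List.mem_cons] at hx'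
        rcases hx' with rfl | hx'
        · exact Set.mem_union_left _ hz1L
        · have : x ∈ q.support := by
            have := hx'
            rwa [show q'.support = q.support from Walk.support_transfer _ _] at this
          rw [show q.support = (p : B.Walk z1 z2).support.reverse from Walk.support_reverse _,
            List.mem_reverse] at this
          rcases auxG_support G Z Y (p : B.Walk z1 z2) x this with rfl | hxx
          · exact Set.mem_union_left _ hz1L
          · rcases hxx with h | h
            · exact Set.mem_union_left _ (hZL h)
            · exact Set.mem_union_right _ h.2
      set L' := L \ {z1} with hL'def
      have hz1L' : z1 ∉ L' := fun h => h.2 rfl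
      have hL'card : L'.ncard = L.ncard - 1 := Set.ncard_diff_singleton_of_mem hz1L
      have hLpos : 0 < L.ncard := (Set.ncard_pos (Set.toFinite _)).mpr ⟨z1, hz1L⟩
      have ihL' := ih L' (by omega) (hdisj.mono_left Set.diff_subset)
        (fun W hW hind => hyp W (hW.trans Set.diff_subset) hind)
      set E₀ : Set (Sym2 V) := {e | e ∈ c.edges} with hE₀
      have hmem : E₀ ∈ cycSet G (L ∪ R) := ⟨z1, c, hcyc, hodd, rfl, hsupp⟩
      have hce : s(z1, z2) ∈ c.edges := by
        show s(z1, z2) ∈ (Walk.cons hadj q').edges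
        rw [Walk.edges_cons]
        exact List.mem_cons_self
      have hnot : E₀ ∉ cycSet G (L' ∪ R) := by
        rintro ⟨v, w', hcyc', hodd', hE, hsupp'⟩
        have hmem' : s(z1, z2) ∈ w'.edges := by
          have h1 : s(z1, z2) ∈ E₀ := hce
          have h2 : s(z1, z2) ∈ {e | e ∈ w'.edges} := hE ▸ h1
          exact h2
        have hz1w : z1 ∈ w'.support := w'.fst_mem_support_of_mem_edges hmem'
        rcases hsupp' z1 hz1w with h | h
        · exact hz1L' h
        · exact Set.disjoint_left.mp hdisj hz1L h
      have hsubset : insert E₀ (cycSet G (L' ∪ R)) ⊆ cycSet G (L ∪ R) := by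
        rintro E hE
        rcases hE with rfl | ⟨v, w', h1, h2, h3, h4⟩
        · exact hmem
        · exact ⟨v, w', h1, h2, h3, fun x hx => (h4 x hx).elim
            (fun hh => Set.mem_union_left _ hh.1) (fun hh => Set.mem_union_right _ hh)⟩
      have hcard : (cycSet G (L' ∪ R)).ncard + 1 ≤ (cycSet G (L ∪ R)).ncard := by
        have hle := Set.ncard_le_ncard hsubset (Set.toFinite _)
        rw [Set.ncard_insert_of_notMem hnot (Set.toFinite _)] at hle
        omega
      omega

end

/-- For every finite simple graph `G`,
`|corona(G)| + |core(G)| ≤ 2·α(G) + k`, where `k` is the number of odd cycles of `G`. -/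
theorem corona_core_le_two_alpha_add_numOddCycles (G : SimpleGraph V) :
    (coronaSet G).ncard + (coreSet G).ncard ≤ 2 * indepNum G + numOddCycles G := by
  classical
  have hne : {n : ℕ | ∃ S : Set V, IsIndep G S ∧ S.ncard = n}.Nonempty :=
    ⟨0, ∅, fun u hu => absurd hu (Set.notMem_empty u), by simp⟩
  have hbdd : BddAbove {n : ℕ | ∃ S : Set V, IsIndep G S ∧ S.ncard = n} := by
    refine ⟨Fintype.card V, ?_⟩
    rintro n ⟨S, _, rfl⟩
    calc S.ncard ≤ (Set.univ : Set V).ncard :=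
          Set.ncard_le_ncard (Set.subset_univ S) Set.finite_univ
      _ = Fintype.card V := by rw [Set.ncard_univ, Nat.card_eq_fintype_card]
  obtain ⟨S, hSind, hScard⟩ := Nat.sSup_mem hne hbdd
  have hmax : ∀ T : Set V, IsIndep G T → T.ncard ≤ S.ncard := by
    intro T hT
    exact (le_csSup hbdd ⟨T, hT, rfl⟩).trans_eq hScard.symm
  have hSmax : IsMaxIndep G S := ⟨hSind, hmax⟩
  have hScoreSub : coreSet G ⊆ S := Set.sInter_subset_of_mem hSmax
  have hScorona : S ⊆ coronaSet G := Set.subset_sUnion_of_mem hSmax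
  have hkey : (coronaSet G \ S).ncard ≤ (S \ coreSet G).ncard +
      (cycSet G ((coronaSet G \ S) ∪ (S \ coreSet G))).ncard := by
    refine key G (S \ coreSet G) ((coronaSet G \ S).ncard) _ le_rfl ?_ ?_
    · exact Set.disjoint_left.mpr (fun x hx hx2 => hx.2 hx2.1)
    · intro Z hZsub hZind
      by_contra hc
      push_neg at hc
      set Y := nbhdSet G Z ∩ (S \ coreSet G) with hYdef
      have hZS : ∀ z ∈ Z, z ∉ S := fun z hz => (hZsub hz).2
      have hZcor : ∀ z ∈ Z, z ∈ coronaSet G := fun z hz => (hZsub hz).1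
      have key2 : ∀ z ∈ Z, ∀ s ∈ S \ Y, ¬ G.Adj z s := by
        intro z hz s hs hzs
        by_cases hsc : s ∈ coreSet G
        · obtain ⟨W, hWmax, hzW⟩ := Set.mem_sUnion.mp (hZcor z hz)
          have hsW : s ∈ W := Set.mem_sInter.mp hsc W hWmax
          exact hWmax.1 hzW hsW hzs
        · exact hs.2 ⟨⟨z, hz, hzs⟩, hs.1, hsc⟩
      have hTind : IsIndep G ((S \ Y) ∪ Z) := by
        intro u hu v hv hadj
        rcases hu with hu | hu <;> rcases hv with hv | hv
        · exact hSind hu.1 hv.1 hadj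
        · exact key2 v hv u hu hadj.symm
        · exact key2 u hu v hv hadj
        · exact hZind hu hv hadj
      have hTcard : ((S \ Y) ∪ Z).ncard = (S \ Y).ncard + Z.ncard :=
        Set.ncard_union_eq (Set.disjoint_left.mpr (fun x hx hxZ => hZS x hxZ hx.1))
          (Set.toFinite _) (Set.toFinite _)
      have hYS : Y ⊆ S := fun y hy => hy.2.1
      have hYcard : (S \ Y).ncard + Y.ncard = S.ncard :=
        Set.ncard_diff_add_ncard_of_subset hYS (Set.toFinite _)
      have hle := hmax _ hTind
      omega
  have h1 : (coronaSet G \ S).ncard + S.ncard = (coronaSet G).ncard :=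
    Set.ncard_diff_add_ncard_of_subset hScorona (Set.toFinite _)
  have h2 : (S \ coreSet G).ncard + (coreSet G).ncard = S.ncard :=
    Set.ncard_diff_add_ncard_of_subset hScoreSub (Set.toFinite _)
  have h3 : (cycSet G ((coronaSet G \ S) ∪ (S \ coreSet G))).ncard ≤ numOddCycles G := by
    apply Set.ncard_le_ncard _ (Set.toFinite _)
    rintro E ⟨v, w', ha, hb, hcc, _⟩
    exact ⟨v, w', ha, hb, hcc⟩
  have hα : indepNum G = S.ncard := hScard.symm
  omega
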